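/- Define the matrix rational parity P(X) = s(X) / Π_{j=0}^{k} s_{{j}}(X), where s(X) is the sum of all maximal minors of the (n+1)×(k+1) matrix X and s_{{j}}(X) is the sum of the entries of column j (assumed nonzero). Then: (a) if k+1 is odd, P(X) is invariant under cyclic permutations of the rows of X; (b) Σ_{j=0}^{k} (-1)^j P(δⱼ*X) = P(X) if k+1 is odd, and = 0 if k+1 is even. -/

import Mathlib

/-- Sum of all maximal minors of an `N × M` matrix. -/
def minorSum {N M : ℕ} {R : Type*} [CommRing R] (X : Matrix (Fin N) (Fin M) R) : R :=
  ∑ T ∈ (Finset.univ.powersetCard M : Finset (Finset (Fin N))).attach,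
    Matrix.det (Matrix.of fun a b =>
      X (T.1.orderEmbOfFin (Finset.mem_powersetCard.mp T.2).2 a) b)

/-- `delCol X j` is the matrix `X` with its `j`-th column deleted. -/
def delCol {N M : ℕ} {R : Type*} (X : Matrix (Fin N) (Fin (M + 1)) R) (j : Fin (M + 1)) :
    Matrix (Fin N) (Fin M) R :=
  Matrix.of fun i a => X i (j.succAbove a)

/-- The matrix rational parity `P(X) = s(X) / Πⱼ s_{{j}}(X)`. -/
def matParity {N M : ℕ} (X : Matrix (Fin N) (Fin M) ℚ) : ℚ :=
  minorSum X / ∏ j, ∑ i, X i j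

open Finset Matrix

namespace MatParityAux

/-- Permuting rows through `g` by `σ`. -/
lemma det_row_perm {N M : ℕ} (X : Matrix (Fin N) (Fin M) ℚ) (g : Fin M → Fin N)
    (σ : Equiv.Perm (Fin M)) :
    Matrix.det (Matrix.of fun a b => X (g (σ a)) b)
      = ((Equiv.Perm.sign σ : ℤ) : ℚ) * Matrix.det (Matrix.of fun a b => X (g a) b) := by
  have h := Matrix.det_permute σ (Matrix.of fun a b => X (g a) b)
  simpa [Matrix.submatrix] using h

lemma orderEmbOfFin_congr {N m : ℕ} {S₁ S₂ : Finset (Fin N)} (h : S₁ = S₂)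
    (h₁ : S₁.card = m) (h₂ : S₂.card = m) (a : Fin m) :
    S₁.orderEmbOfFin h₁ a = S₂.orderEmbOfFin h₂ a := by subst h; rfl

/-- Per-subset determinant identity for the cyclic shift, when `k` is even. -/
lemma shift_det {n k : ℕ} (hk : Even k) (X : Matrix (Fin (n+1)) (Fin (k+1)) ℚ)
    (T T' : Finset (Fin (n+1))) (hT : T.card = k+1) (hT' : T'.card = k+1)
    (hmem : ∀ x ∈ T, x - 1 ∈ T') :
    Matrix.det (Matrix.of fun a b => X (T.orderEmbOfFin hT a - 1) b)
      = Matrix.det (Matrix.of fun a b => X (T'.orderEmbOfFin hT' a) b) := by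
  set f : Fin (k+1) → Fin (n+1) := fun a => T.orderEmbOfFin hT a with hf
  have hfmono : StrictMono f := (T.orderEmbOfFin hT).strictMono
  have hfT : ∀ a, f a ∈ T := fun a => T.orderEmbOfFin_mem hT a
  by_cases h0 : (0 : Fin (n+1)) ∈ T
  · -- `0 ∈ T` : rotation case
    have hf0 : f 0 = 0 := by
      have h1 : f ⟨0, Nat.succ_pos k⟩ = T.min' (Finset.card_pos.mp (by omega)) :=
        Finset.orderEmbOfFin_zero hT (Nat.succ_pos k)
      have h2 : T.min' (Finset.card_pos.mp (by omega)) = 0 :=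
        le_antisymm (Finset.min'_le _ _ h0) (Fin.zero_le _)
      have h3 : (⟨0, Nat.succ_pos k⟩ : Fin (k+1)) = 0 := rfl
      rw [← h3]; rw [h1, h2]
    have hfz : ∀ a : Fin (k+1), f a = 0 ↔ a = 0 := by
      intro a
      constructor
      · intro h; by_contra hne
        have h4 : f 0 < f a := hfmono ((Fin.pos_iff_ne_zero' a).mpr hne)
        rw [hf0, h] at h4; exact lt_irrefl _ h4
      · intro h; rw [h, hf0]
    set rot := finRotate (k+1) with hrotdef
    set g : Fin (k+1) → Fin (n+1) := fun b => f (rot b) - 1 with hg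
    have hgmem : ∀ b, g b ∈ T' := fun b => hmem _ (hfT _)
    have hval : ∀ x : Fin (k+1), ((f x - 1 : Fin (n+1)) : ℕ)
        = if x = 0 then n else (f x : ℕ) - 1 := by
      intro x
      by_cases hx : x = 0
      · rw [Fin.coe_sub_one, if_pos ((hfz x).mpr hx), if_pos hx]
      · rw [Fin.coe_sub_one, if_neg (fun h => hx ((hfz x).mp h)), if_neg hx]
    have hvpos : ∀ x : Fin (k+1), x ≠ 0 → 0 < (f x : ℕ) := by
      intro x hx
      have : f x ≠ 0 := fun h => hx ((hfz x).mp h)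
      have : (f x : ℕ) ≠ 0 := fun h => this (Fin.ext (by simpa using h))
      omega
    have hrotz : ∀ b : Fin (k+1), rot b = 0 ↔ b = Fin.last k := by
      intro b
      constructor
      · intro h
        have : rot b = rot (Fin.last k) := by rw [h, hrotdef, finRotate_last]
        exact (finRotate (k+1)).injective this
      · rintro rfl; exact finRotate_last
    have hgmono : StrictMono g := by
      intro a b hab
      have hane : rot a ≠ 0 := by
        rw [Ne, hrotz]
        rintro rfl
        exact absurd hab (not_lt.mpr (Fin.le_last b))
      rw [Fin.lt_iff_val_lt_val]
      show ((f (rot a) - 1 : Fin (n+1)) : ℕ) < ((f (rot b) - 1 : Fin (n+1)) : ℕ)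
      rw [hval (rot a), hval (rot b), if_neg hane]
      have hfle : (f (rot a) : ℕ) ≤ n := Nat.lt_succ_iff.mp (f (rot a)).isLt
      have hfpos := hvpos _ hane
      by_cases hbl : b = Fin.last k
      · rw [if_pos ((hrotz b).mpr hbl)]
        omega
      · rw [if_neg (fun h => hbl ((hrotz b).mp h))]
        have hbne : rot b ≠ 0 := fun h => hbl ((hrotz b).mp h)
        have hlt : rot a < rot b := by
          have ha' : a ≠ Fin.last k := by
            rintro rfl; exact absurd hab (not_lt.mpr (Fin.le_last b))
          rw [Fin.lt_iff_val_lt_val, hrotdef] at *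
          rw [coe_finRotate, coe_finRotate, if_neg ha', if_neg hbl]
          omega
        have h5 := hfmono hlt
        rw [Fin.lt_iff_val_lt_val] at h5
        have := hvpos _ hbne
        omega
    have hgeq : g = fun a => T'.orderEmbOfFin hT' a :=
      Finset.orderEmbOfFin_unique hT' hgmem hgmono
    have hcomp : ∀ a : Fin (k+1), f a - 1 = T'.orderEmbOfFin hT' (rot⁻¹ a) := by
      intro a
      have : g (rot⁻¹ a) = T'.orderEmbOfFin hT' (rot⁻¹ a) := congrFun hgeq _
      rw [← this, hg]
      simp
    have hM : (Matrix.of fun a b => X (f a - 1) b)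
        = Matrix.of fun (a : Fin (k+1)) b => X (T'.orderEmbOfFin hT' (rot⁻¹ a)) b := by
      ext a b; simp only [Matrix.of_apply]; rw [hcomp a]
    rw [show (Matrix.of fun a b => X (T.orderEmbOfFin hT a - 1) b)
        = Matrix.of fun a b => X (f a - 1) b from rfl, hM,
      det_row_perm X (fun a => T'.orderEmbOfFin hT' a) rot⁻¹]
    have hsign : Equiv.Perm.sign (rot⁻¹) = 1 := by
      rw [map_inv, hrotdef, sign_finRotate, Nat.add_sub_cancel, hk.neg_one_pow]
      rfl
    rw [hsign]
    norm_num
  · -- `0 ∉ T` : order preserved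
    have hne : ∀ a, f a ≠ 0 := fun a h => h0 (h ▸ hfT a)
    have hvne : ∀ a, (f a : ℕ) ≠ 0 := by
      intro a h
      exact hne a (Fin.ext (by simpa using h))
    have hmono : StrictMono (fun a => f a - 1) := by
      intro a b hab
      have h1 := hfmono hab
      rw [Fin.lt_iff_val_lt_val] at h1 ⊢
      rw [Fin.coe_sub_one, Fin.coe_sub_one, if_neg (hne a), if_neg (hne b)]
      have := hvne a
      omega
    have heq : (fun a => f a - 1) = fun a => T'.orderEmbOfFin hT' a :=
      Finset.orderEmbOfFin_unique hT' (fun a => hmem _ (hfT a)) hmono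
    have hM : (Matrix.of fun a b => X (T.orderEmbOfFin hT a - 1) b)
        = Matrix.of fun (a : Fin (k+1)) b => X (T'.orderEmbOfFin hT' a) b := by
      ext a b; simp only [Matrix.of_apply]
      exact congrArg (fun z => X z b) (congrFun heq a)
    rw [hM]

/-- Cyclic shift invariance of the minor sum for even `k`. -/
lemma minorSum_shift {n k : ℕ} (hk : Even k) (X : Matrix (Fin (n+1)) (Fin (k+1)) ℚ) :
    minorSum (Matrix.of fun i j => X (i - 1) j) = minorSum X := by
  unfold minorSum
  refine Finset.sum_nbij'
    (fun T => ⟨T.1.map (Equiv.subRight (1 : Fin (n+1))).toEmbedding, ?_⟩)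
    (fun T => ⟨T.1.map ((Equiv.subRight (1 : Fin (n+1))).symm).toEmbedding, ?_⟩)
    (fun _ _ => Finset.mem_attach _ _) (fun _ _ => Finset.mem_attach _ _) ?_ ?_ ?_
  · rw [Finset.mem_powersetCard]
    exact ⟨Finset.subset_univ _, by
      rw [Finset.card_map]; exact (Finset.mem_powersetCard.mp T.2).2⟩
  · rw [Finset.mem_powersetCard]
    exact ⟨Finset.subset_univ _, by
      rw [Finset.card_map]; exact (Finset.mem_powersetCard.mp T.2).2⟩
  · intro T _
    apply Subtype.ext
    simp only [Finset.map_map]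
    ext x
    simp [Finset.mem_map]
  · intro T _
    apply Subtype.ext
    simp only [Finset.map_map]
    ext x
    simp [Finset.mem_map]
  · intro T _
    exact shift_det hk X T.1 _ (Finset.mem_powersetCard.mp T.2).2 _
      (fun x hx => by
        rw [Finset.mem_map]
        exact ⟨x, hx, rfl⟩)


/-- Deleting the `p`-th element of a sorted finset. -/
lemma erase_orderEmb {N M : ℕ} (T : Finset (Fin N)) (hT : T.card = M + 1) (p : Fin (M+1))
    (hS : (T.erase (T.orderEmbOfFin hT p)).card = M) (a : Fin M) :
    (T.erase (T.orderEmbOfFin hT p)).orderEmbOfFin hS a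
      = T.orderEmbOfFin hT (p.succAbove a) := by
  have h := Finset.orderEmbOfFin_unique hS
    (f := fun a : Fin M => T.orderEmbOfFin hT (p.succAbove a)) ?_ ?_
  · exact (congrFun h a).symm
  · intro x
    rw [Finset.mem_erase]
    refine ⟨fun h => Fin.succAbove_ne p x ((T.orderEmbOfFin hT).injective h), ?_⟩
    exact Finset.orderEmbOfFin_mem T hT _
  · exact (T.orderEmbOfFin hT).strictMono.comp (Fin.strictMono_succAbove p)

/-- The permutation matching `snoc (succAbove p) p` against the identity. -/
lemma snoc_perm {k : ℕ} (p : Fin (k+1)) :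
    ∃ σ : Equiv.Perm (Fin (k+1)),
      (∀ b : Fin k, σ (Fin.castSucc b) = p.succAbove b) ∧ (σ (Fin.last k) = p) ∧
      Equiv.Perm.sign σ = (-1)^((p:ℕ) + k) := by
  refine ⟨(p.cycleRange)⁻¹ * finRotate (k+1), ?_, ?_, ?_⟩
  · intro b
    have h1 : finRotate (k+1) (Fin.castSucc b) = Fin.succ b := by
      rw [finRotate_succ_apply, Fin.coeSucc_eq_succ]
    have h2 : p.cycleRange (p.succAbove b) = Fin.succ b := Fin.cycleRange_succAbove p b
    simp only [Equiv.Perm.mul_apply, h1]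
    exact Equiv.Perm.inv_eq_iff_eq.mpr h2.symm
  · have h1 : finRotate (k+1) (Fin.last k) = 0 := finRotate_last
    have h2 : p.cycleRange p = 0 := Fin.cycleRange_self p
    simp only [Equiv.Perm.mul_apply, h1]
    exact Equiv.Perm.inv_eq_iff_eq.mpr h2.symm
  · rw [_root_.map_mul, map_inv, Fin.sign_cycleRange, sign_finRotate]
    simp [pow_add]

/-- The determinant of the matrix with rows `S = T.erase (f_T p)` and last row `f_T p`. -/
lemma term_eq {n k : ℕ} (X : Matrix (Fin (n+1)) (Fin (k+1)) ℚ) (T : Finset (Fin (n+1)))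
    (hT : T.card = k+1) (p : Fin (k+1)) (hS : (T.erase (T.orderEmbOfFin hT p)).card = k) :
    Matrix.det (Matrix.of fun a b =>
        X ((Fin.snoc (fun c => (T.erase (T.orderEmbOfFin hT p)).orderEmbOfFin hS c)
            (T.orderEmbOfFin hT p) : Fin (k+1) → Fin (n+1)) a) b)
      = (-1:ℚ)^((p:ℕ) + k) * Matrix.det (Matrix.of fun a b => X (T.orderEmbOfFin hT a) b) := by
  obtain ⟨σ, hσ1, hσ2, hsign⟩ := snoc_perm p
  have hrow : ∀ a : Fin (k+1),
      (Fin.snoc (fun c => (T.erase (T.orderEmbOfFin hT p)).orderEmbOfFin hS c)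
        (T.orderEmbOfFin hT p) : Fin (k+1) → Fin (n+1)) a = T.orderEmbOfFin hT (σ a) := by
    intro a
    refine Fin.lastCases ?_ ?_ a
    · rw [Fin.snoc_last, hσ2]
    · intro b
      rw [Fin.snoc_castSucc, erase_orderEmb, hσ1]
  have hM : (Matrix.of fun a b =>
      X ((Fin.snoc (fun c => (T.erase (T.orderEmbOfFin hT p)).orderEmbOfFin hS c)
          (T.orderEmbOfFin hT p) : Fin (k+1) → Fin (n+1)) a) b)
      = Matrix.of fun (a : Fin (k+1)) b => X (T.orderEmbOfFin hT (σ a)) b := by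
    ext a b; simp only [Matrix.of_apply]; rw [hrow a]
  rw [hM, det_row_perm X (fun a => T.orderEmbOfFin hT a) σ, hsign]
  norm_num

/-- Laplace expansion of the snoc-matrix along its last row. -/
lemma cofactor {n k : ℕ} (X : Matrix (Fin (n+1)) (Fin (k+1)) ℚ) (S : Finset (Fin (n+1)))
    (hS : S.card = k) (i : Fin (n+1)) :
    Matrix.det (Matrix.of fun a b =>
        X ((Fin.snoc (fun c => S.orderEmbOfFin hS c) i : Fin (k+1) → Fin (n+1)) a) b)
      = ∑ j : Fin (k+1), (-1:ℚ)^(k + (j:ℕ)) * X i j *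
          Matrix.det (Matrix.of fun a b => X (S.orderEmbOfFin hS a) (j.succAbove b)) := by
  rw [Matrix.det_succ_row _ (Fin.last k)]
  refine Finset.sum_congr rfl fun j _ => ?_
  have e1 : (Matrix.of fun a b =>
      X ((Fin.snoc (fun c => S.orderEmbOfFin hS c) i : Fin (k+1) → Fin (n+1)) a) b)
        (Fin.last k) j = X i j := by
    simp [Fin.snoc_last]
  have e2 : ((Matrix.of fun a b =>
      X ((Fin.snoc (fun c => S.orderEmbOfFin hS c) i : Fin (k+1) → Fin (n+1)) a) b).submatrix
        (Fin.last k).succAbove j.succAbove)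
      = Matrix.of fun a b => X (S.orderEmbOfFin hS a) (j.succAbove b) := by
    ext a b
    simp [Fin.succAbove_last, Fin.snoc_castSucc]
  rw [e1, e2, Fin.val_last]


lemma emb_iso_symm {N m : ℕ} (s : Finset (Fin N)) (h : s.card = m) (z : {a // a ∈ s}) :
    s.orderEmbOfFin h ((s.orderIsoOfFin h).symm z) = (z : Fin N) := by
  rw [← Finset.coe_orderIsoOfFin_apply, OrderIso.apply_symm_apply]

lemma iso_symm_emb {N m : ℕ} {s t : Finset (Fin N)} (hst : s = t) (hs : s.card = m)
    (ht : t.card = m) (p : Fin m) (hmem : t.orderEmbOfFin ht p ∈ s) :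
    (s.orderIsoOfFin hs).symm ⟨t.orderEmbOfFin ht p, hmem⟩ = p := by
  subst hst
  rw [OrderIso.symm_apply_eq]
  exact Subtype.ext (Finset.coe_orderIsoOfFin_apply s hs p).symm ▸ rfl

lemma sigma_bij {n k : ℕ}
    (F : {x // x ∈ (Finset.univ.powersetCard k : Finset (Finset (Fin (n+1))))} → Fin (n+1) → ℚ)
    (G : {x // x ∈ (Finset.univ.powersetCard (k+1) : Finset (Finset (Fin (n+1))))} → Fin (k+1) → ℚ)
    (hFG : ∀ T p S i,
      S.1 = T.1.erase (T.1.orderEmbOfFin (Finset.mem_powersetCard.mp T.2).2 p) →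
      i = T.1.orderEmbOfFin (Finset.mem_powersetCard.mp T.2).2 p → F S i = G T p) :
    ∑ S ∈ (Finset.univ.powersetCard k : Finset (Finset (Fin (n+1)))).attach,
        ∑ i ∈ Finset.univ.filter (fun i => i ∉ S.1), F S i
      = ∑ T ∈ (Finset.univ.powersetCard (k+1) : Finset (Finset (Fin (n+1)))).attach,
          ∑ p : Fin (k+1), G T p := by
  classical
  rw [Finset.sum_sigma' _ _ (fun S i => F S i), Finset.sum_sigma' _ _ (fun T p => G T p)]
  refine Finset.sum_bij'
    (fun x hx =>
      have hni : x.2 ∉ x.1.1 := (Finset.mem_filter.mp (Finset.mem_sigma.mp hx).2).2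
      have hc : (insert x.2 x.1.1).card = k + 1 := by
        rw [Finset.card_insert_of_notMem hni, (Finset.mem_powersetCard.mp x.1.2).2]
      (⟨⟨insert x.2 x.1.1, Finset.mem_powersetCard.mpr ⟨Finset.subset_univ _, hc⟩⟩,
        (Finset.orderIsoOfFin _ hc).symm ⟨x.2, Finset.mem_insert_self _ _⟩⟩ :
        (T : {x // x ∈ (Finset.univ.powersetCard (k+1) : Finset (Finset (Fin (n+1))))}) × Fin (k+1)))
    (fun y _ =>
      have hc : y.1.1.card = k + 1 := (Finset.mem_powersetCard.mp y.1.2).2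
      have he : (y.1.1.erase (y.1.1.orderEmbOfFin hc y.2)).card = k := by
        rw [Finset.card_erase_of_mem (Finset.orderEmbOfFin_mem _ hc _), hc]
        rfl
      (⟨⟨y.1.1.erase (y.1.1.orderEmbOfFin hc y.2),
          Finset.mem_powersetCard.mpr ⟨Finset.subset_univ _, he⟩⟩,
        y.1.1.orderEmbOfFin hc y.2⟩ :
        (S : {x // x ∈ (Finset.univ.powersetCard k : Finset (Finset (Fin (n+1))))}) × Fin (n+1)))
    ?_ ?_ ?_ ?_ ?_
  · -- forward lands in target
    intro x _
    exact Finset.mem_sigma.mpr ⟨Finset.mem_attach _ _, Finset.mem_univ _⟩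
  · -- backward lands in source
    intro y _
    exact Finset.mem_sigma.mpr ⟨Finset.mem_attach _ _,
      Finset.mem_filter.mpr ⟨Finset.mem_univ _, Finset.notMem_erase _ _⟩⟩
  · -- left inverse
    intro x hx
    have hni : x.2 ∉ x.1.1 := (Finset.mem_filter.mp (Finset.mem_sigma.mp hx).2).2
    refine Sigma.ext (Subtype.ext ?_) (heq_of_eq ?_)
    · show (insert x.2 x.1.1).erase _ = x.1.1
      rw [emb_iso_symm]
      exact Finset.erase_insert hni
    · show (insert x.2 x.1.1).orderEmbOfFin _ _ = x.2
      rw [emb_iso_symm]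
  · -- right inverse
    intro y _
    have hc : y.1.1.card = k + 1 := (Finset.mem_powersetCard.mp y.1.2).2
    have hins : insert (y.1.1.orderEmbOfFin hc y.2)
        (y.1.1.erase (y.1.1.orderEmbOfFin hc y.2)) = y.1.1 :=
      Finset.insert_erase (Finset.orderEmbOfFin_mem _ hc _)
    refine Sigma.ext (Subtype.ext ?_) (heq_of_eq ?_)
    · exact hins
    · exact iso_symm_emb hins _ hc y.2 _
  · -- the summands agree
    intro x hx
    have hni : x.2 ∉ x.1.1 := (Finset.mem_filter.mp (Finset.mem_sigma.mp hx).2).2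
    refine hFG _ _ _ _ ?_ ?_
    · show (x.1.1 : Finset (Fin (n+1)))
        = (insert x.2 x.1.1).erase ((insert x.2 x.1.1).orderEmbOfFin _ _)
      rw [emb_iso_symm]
      exact (Finset.erase_insert hni).symm
    · show x.2 = (insert x.2 x.1.1).orderEmbOfFin _ _
      rw [emb_iso_symm]


lemma keySum {n k : ℕ} (X : Matrix (Fin (n+1)) (Fin (k+1)) ℚ) :
    ∑ j : Fin (k+1), (-1:ℚ)^(j:ℕ) * (∑ i, X i j) * minorSum (delCol X j)
      = if Even k then minorSum X else 0 := by
  classical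
  have hpow : ∀ m : ℕ, (-1:ℚ)^k * (-1:ℚ)^(k+m) = (-1:ℚ)^m := by
    intro m
    rw [← pow_add, show k+(k+m) = 2*k+m by ring, pow_add, pow_mul]
    norm_num
  have hdet0 : ∀ (S : Finset (Fin (n+1))) (hS : S.card = k) (i : Fin (n+1)), i ∈ S →
      Matrix.det (Matrix.of fun a b =>
        X ((Fin.snoc (fun c => S.orderEmbOfFin hS c) i : Fin (k+1) → Fin (n+1)) a) b) = 0 := by
    intro S hS i hi
    obtain ⟨a, ha⟩ : ∃ a, S.orderEmbOfFin hS a = i := by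
      have h2 : i ∈ Set.range (S.orderEmbOfFin hS) := by
        rw [Finset.range_orderEmbOfFin]
        exact hi
      exact h2
    refine Matrix.det_zero_of_row_eq (Fin.ne_of_lt (Fin.castSucc_lt_last a)) ?_
    funext b
    simp [Fin.snoc_castSucc, Fin.snoc_last, ha]
  calc
    ∑ j : Fin (k+1), (-1:ℚ)^(j:ℕ) * (∑ i, X i j) * minorSum (delCol X j)
      = ∑ j : Fin (k+1),
          ∑ S ∈ (Finset.univ.powersetCard k : Finset (Finset (Fin (n+1)))).attach,
          ∑ i : Fin (n+1),
          (-1:ℚ)^(j:ℕ) * X i j * Matrix.det (Matrix.of fun a b =>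
            X (S.1.orderEmbOfFin (Finset.mem_powersetCard.mp S.2).2 a) (j.succAbove b)) := by
        refine Finset.sum_congr rfl fun j _ => ?_
        have h1 : minorSum (delCol X j)
            = ∑ S ∈ (Finset.univ.powersetCard k : Finset (Finset (Fin (n+1)))).attach,
              Matrix.det (Matrix.of fun a b =>
                X (S.1.orderEmbOfFin (Finset.mem_powersetCard.mp S.2).2 a) (j.succAbove b)) := rfl
        rw [h1, Finset.mul_sum]
        refine Finset.sum_congr rfl fun S _ => ?_
        rw [Finset.mul_sum, Finset.sum_mul]
    _ = ∑ S ∈ (Finset.univ.powersetCard k : Finset (Finset (Fin (n+1)))).attach,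
          ∑ i : Fin (n+1), ∑ j : Fin (k+1),
          (-1:ℚ)^(j:ℕ) * X i j * Matrix.det (Matrix.of fun a b =>
            X (S.1.orderEmbOfFin (Finset.mem_powersetCard.mp S.2).2 a) (j.succAbove b)) := by
        rw [Finset.sum_comm]
        refine Finset.sum_congr rfl fun S _ => ?_
        rw [Finset.sum_comm]
    _ = ∑ S ∈ (Finset.univ.powersetCard k : Finset (Finset (Fin (n+1)))).attach,
          ∑ i : Fin (n+1),
          (-1:ℚ)^k * Matrix.det (Matrix.of fun a b =>
            X ((Fin.snoc (fun c => S.1.orderEmbOfFin (Finset.mem_powersetCard.mp S.2).2 c) i :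
              Fin (k+1) → Fin (n+1)) a) b) := by
        refine Finset.sum_congr rfl fun S _ => Finset.sum_congr rfl fun i _ => ?_
        rw [cofactor X S.1 (Finset.mem_powersetCard.mp S.2).2 i, Finset.mul_sum]
        refine Finset.sum_congr rfl fun j _ => ?_
        rw [show ((-1:ℚ)^k * ((-1:ℚ)^(k+(j:ℕ)) * X i j * Matrix.det (Matrix.of fun a b =>
            X (S.1.orderEmbOfFin (Finset.mem_powersetCard.mp S.2).2 a) (j.succAbove b))))
          = ((-1:ℚ)^k * (-1:ℚ)^(k+(j:ℕ))) * X i j * Matrix.det (Matrix.of fun a b =>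
            X (S.1.orderEmbOfFin (Finset.mem_powersetCard.mp S.2).2 a) (j.succAbove b)) by ring,
          hpow]
    _ = ∑ S ∈ (Finset.univ.powersetCard k : Finset (Finset (Fin (n+1)))).attach,
          ∑ i ∈ Finset.univ.filter (fun i => i ∉ S.1),
          (-1:ℚ)^k * Matrix.det (Matrix.of fun a b =>
            X ((Fin.snoc (fun c => S.1.orderEmbOfFin (Finset.mem_powersetCard.mp S.2).2 c) i :
              Fin (k+1) → Fin (n+1)) a) b) := by
        refine Finset.sum_congr rfl fun S _ => ?_
        refine (Finset.sum_filter_of_ne ?_).symm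
        intro i _ hne
        by_contra hi
        exact hne (by rw [hdet0 S.1 (Finset.mem_powersetCard.mp S.2).2 i hi, mul_zero])
    _ = ∑ T ∈ (Finset.univ.powersetCard (k+1) : Finset (Finset (Fin (n+1)))).attach,
          ∑ p : Fin (k+1),
          (-1:ℚ)^k * ((-1:ℚ)^((p:ℕ)+k) * Matrix.det (Matrix.of fun a b =>
            X (T.1.orderEmbOfFin (Finset.mem_powersetCard.mp T.2).2 a) b)) := by
        refine sigma_bij _ _ ?_
        intro T p S i h1 h2
        set hT := (Finset.mem_powersetCard.mp T.2).2
        have hS : (S.1 : Finset (Fin (n+1))).card = k := (Finset.mem_powersetCard.mp S.2).2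
        have hS' : ((T.1 : Finset (Fin (n+1))).erase (T.1.orderEmbOfFin hT p)).card = k := by
          rw [← h1]; exact hS
        have hM : (Matrix.of fun a b =>
            X ((Fin.snoc (fun c => S.1.orderEmbOfFin hS c) i : Fin (k+1) → Fin (n+1)) a) b)
            = Matrix.of fun a b =>
            X ((Fin.snoc (fun c => ((T.1 : Finset (Fin (n+1))).erase
                  (T.1.orderEmbOfFin hT p)).orderEmbOfFin hS' c)
                (T.1.orderEmbOfFin hT p) : Fin (k+1) → Fin (n+1)) a) b := by
          ext a b
          simp only [Matrix.of_apply]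
          congr 1
          refine Fin.lastCases ?_ ?_ a
          · rw [Fin.snoc_last, Fin.snoc_last, h2]
          · intro c
            rw [Fin.snoc_castSucc, Fin.snoc_castSucc]
            exact orderEmbOfFin_congr h1 hS hS' c
        rw [hM, term_eq X T.1 hT p hS']
    _ = ∑ T ∈ (Finset.univ.powersetCard (k+1) : Finset (Finset (Fin (n+1)))).attach,
          (if Even k then (1:ℚ) else 0) * Matrix.det (Matrix.of fun a b =>
            X (T.1.orderEmbOfFin (Finset.mem_powersetCard.mp T.2).2 a) b) := by
        refine Finset.sum_congr rfl fun T _ => ?_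
        set D : ℚ := Matrix.det (Matrix.of fun a b =>
          X (T.1.orderEmbOfFin (Finset.mem_powersetCard.mp T.2).2 a) b) with hD
        calc ∑ p : Fin (k+1), (-1:ℚ)^k * ((-1:ℚ)^((p:ℕ)+k) * D)
            = ∑ p : Fin (k+1), ((-1:ℚ)^k * (-1:ℚ)^((p:ℕ)+k)) * D :=
              Finset.sum_congr rfl fun p _ => by ring
          _ = (∑ p : Fin (k+1), (-1:ℚ)^k * (-1:ℚ)^((p:ℕ)+k)) * D :=
              (Finset.sum_mul _ _ _).symm
          _ = (if Even k then (1:ℚ) else 0) * D := by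
              congr 1
              calc ∑ p : Fin (k+1), (-1:ℚ)^k * (-1:ℚ)^((p:ℕ)+k)
                  = ∑ p : Fin (k+1), (-1:ℚ)^(p:ℕ) :=
                    Finset.sum_congr rfl fun p _ => by rw [add_comm ((p:ℕ)) k, hpow]
                _ = ∑ m ∈ Finset.range (k+1), (-1:ℚ)^m := Fin.sum_univ_eq_sum_range _ _
                _ = if Even (k+1) then 0 else 1 := neg_one_geom_sum
                _ = if Even k then (1:ℚ) else 0 := by
                    by_cases h : Even k <;> simp [h, Nat.even_add_one]
    _ = if Even k then minorSum X else 0 := by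
        by_cases hk : Even k
        · simp only [if_pos hk, one_mul]
          rfl
        · simp only [if_neg hk, zero_mul]
          exact Finset.sum_const_zero

end MatParityAux

/-- Properties of the matrix rational parity: (a) if `k+1` is odd, `P` is invariant
under cyclic permutation of the rows (sending row `i` to row `i+1 mod (n+1)`);
(b) `Σⱼ (-1)^j P(δⱼ*X)` equals `P(X)` if `k+1` is odd and `0` if `k+1` is even. -/
theorem matParity_props (n k : ℕ) (hkn : k ≤ n)
    (X : Matrix (Fin (n + 1)) (Fin (k + 1)) ℚ) (hcol : ∀ j, ∑ i, X i j ≠ 0) :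
    (Even k → matParity (Matrix.of fun i j => X (i - 1) j) = matParity X) ∧
    (∑ j : Fin (k + 1), (-1) ^ (j : ℕ) * matParity (delCol X j)
      = if Even k then matParity X else 0) := by
  classical
  constructor
  · intro hk
    unfold matParity
    rw [MatParityAux.minorSum_shift hk X]
    congr 1
    refine Finset.prod_congr rfl fun j _ => ?_
    exact Fintype.sum_bijective (fun i : Fin (n+1) => i - 1)
      ((Equiv.subRight (1 : Fin (n+1))).bijective) _ _ (fun i => rfl)
  · have hsplit : ∀ j : Fin (k+1), matParity (delCol X j)
        = (∑ i, X i j) * minorSum (delCol X j) / ∏ j', ∑ i, X i j' := by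
      intro j
      unfold matParity
      have hprod : (∏ j', ∑ i, X i j')
          = (∑ i, X i j) * ∏ b : Fin k, ∑ i, X i (j.succAbove b) :=
        Fin.prod_univ_succAbove (fun j' => ∑ i, X i j') j
      rw [hprod, mul_div_mul_left _ _ (hcol j)]
      rfl
    calc ∑ j : Fin (k+1), (-1:ℚ) ^ (j : ℕ) * matParity (delCol X j)
        = ∑ j : Fin (k+1), ((-1:ℚ) ^ (j : ℕ) * (∑ i, X i j) * minorSum (delCol X j))
            / (∏ j', ∑ i, X i j') := by
          refine Finset.sum_congr rfl fun j _ => ?_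
          rw [hsplit j]
          ring
      _ = (∑ j : Fin (k+1), (-1:ℚ) ^ (j : ℕ) * (∑ i, X i j) * minorSum (delCol X j))
            / (∏ j', ∑ i, X i j') := by rw [Finset.sum_div]
      _ = (if Even k then minorSum X else 0) / (∏ j', ∑ i, X i j') := by
          rw [MatParityAux.keySum X]
      _ = if Even k then matParity X else 0 := by
          by_cases hk : Even k
          · simp only [if_pos hk]
            rfl
          · simp only [if_neg hk, zero_div]
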